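/- For every alphabet Σ, every n ≥ 1, and every k with 0 < k ≤ 2ⁿ, there exist n NFAs with at most six states each (obtained from the counting automata Aᵢ by choosing initial states encoding k−1 in binary) whose parallel composition recognizes a language whose projection to Σ equals Σ^{2ⁿ−k}. -/

import Mathlib

/-- An NFA with marked states. -/
structure NFAm (Q E : Type) where
  δ : Q → E → Set Q
  I : Set Q
  F : Set Q

/-- Extended transition function on sets of states. -/
def NFAm.run {Q E : Type} (A : NFAm Q E) : List E → Set Q → Set Q
  | [], S => S
  | a :: w, S => A.run w {q | ∃ p ∈ S, q ∈ A.δ p a}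

/-- The language recognized (marked) by the automaton. -/
def NFAm.Lm {Q E : Type} (A : NFAm Q E) : Set (List E) :=
  {w | (A.run w A.I ∩ A.F).Nonempty}

/-- Fully synchronous product of a family of NFAs over a common alphabet. -/
def prodN {n : ℕ} {E : Type} {Qs : Fin n → Type} (A : ∀ i, NFAm (Qs i) E) :
    NFAm (∀ i, Qs i) E where
  δ := fun p a => {q | ∀ i, q i ∈ (A i).δ (p i) a}
  I := {p | ∀ i, p i ∈ (A i).I}
  F := {p | ∀ i, p i ∈ (A i).F}

/-- Natural projection of a word over `Σ ⊕ Γ` to `Σ` (erasing the `Γ`-events). -/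
def projL {E F : Type} : List (E ⊕ F) → List E :=
  List.filterMap (Sum.elim some fun _ => none)

/-- Natural projection of a word over `Σ ⊕ Γ` to `Γ` (erasing the `Σ`-events). -/
def projR {E F : Type} : List (E ⊕ F) → List F :=
  List.filterMap (Sum.elim (fun _ => none) some)

namespace SixState

def Cond (c j : ℕ) : Prop := (∀ i < j, c.testBit i = true) ∧ c.testBit j = false

lemma testBit_succ_of {c j : ℕ} (h : Cond c j) (i : ℕ) :
    (c+1).testBit i = if i < j then false else if i = j then true else c.testBit i := by
  obtain ⟨h1, h2⟩ := h
  have hmod : c % 2^(j+1) = 2^j - 1 := by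
    apply Nat.eq_of_testBit_eq
    intro t
    rw [Nat.testBit_mod_two_pow, Nat.testBit_two_pow_sub_one]
    rcases lt_trichotomy t j with hlt | rfl | hgt
    · simp [h1 t hlt, hlt, hlt.trans (Nat.lt_succ_self j)]
    · simp [h2]
    · simp only [decide_eq_false (by omega : ¬ t < j + 1), Bool.false_and]
      rw [decide_eq_false (by omega : ¬ t < j)]
  set a := c / 2^(j+1) with ha
  have hc : c + 1 = 2^(j+1) * a + 2^j := by
    have hd := Nat.div_add_mod c (2^(j+1))
    rw [hmod, ← ha] at hd
    have h2j : 1 ≤ (2:ℕ)^j := Nat.one_le_two_pow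
    omega
  rcases lt_trichotomy i j with hlt | heq | hgt
  · rw [if_pos hlt]
    have p1 : (2:ℕ)^i * (2 * 2^(j-i)) = 2^(j+1) := by
      rw [← pow_succ', ← pow_add]; congr 1; omega
    have p2 : (2:ℕ)^i * (2 * 2^(j-1-i)) = 2^j := by
      rw [← pow_succ', ← pow_add]; congr 1; omega
    have e1 : c + 1 = 2^i * (2 * (2^(j-i) * a + 2^(j-1-i))) := by
      rw [hc, ← p1, ← p2]; ring
    rw [Nat.testBit_eq_decide_div_mod_eq, e1, Nat.mul_div_cancel_left _ (Nat.pow_pos (n := i) (by norm_num))]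
    simp [Nat.mul_mod_right]
  · subst heq
    rw [if_neg (lt_irrefl i), if_pos rfl]
    have e1 : c + 1 = 2^i * (2 * a + 1) := by
      rw [hc, pow_succ]; ring
    rw [Nat.testBit_eq_decide_div_mod_eq, e1, Nat.mul_div_cancel_left _ (Nat.pow_pos (n := i) (by norm_num))]
    simp [Nat.mul_add_mod]
  · rw [if_neg (by omega), if_neg (by omega)]
    have key : (c+1) / 2^i = c / 2^i := by
      have e2 : (2:ℕ)^i = 2^(j+1) * 2^(i-j-1) := by rw [← pow_add]; congr 1; omega
      have d1 : (c+1) / 2^(j+1) = a := by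
        rw [hc, Nat.mul_add_div (Nat.pow_pos (by norm_num)),
          Nat.div_eq_of_lt (Nat.pow_lt_pow_right (by norm_num) (Nat.lt_succ_self j)), Nat.add_zero]
      rw [e2, ← Nat.div_div_eq_div_mul, ← Nat.div_div_eq_div_mul, d1, ha]
    rw [Nat.testBit_eq_decide_div_mod_eq, Nat.testBit_eq_decide_div_mod_eq, key]


inductive St | b0 | b1 | pp | qq | rr | ss
deriving DecidableEq

instance : Fintype St where
  elems := {.b0, .b1, .pp, .qq, .rr, .ss}
  complete := by intro x; cases x <;> simp

variable (Sig : Type) (n : ℕ)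

def delta (i : Fin n) : St → (Sig ⊕ Fin n) → Set St
  | .b0, .inr j => if (j:ℕ) < (i:ℕ) then {.pp} else if (j:ℕ) = (i:ℕ) then {.rr} else ∅
  | .b1, .inr j => if (j:ℕ) < (i:ℕ) then {.qq} else if (i:ℕ) < (j:ℕ) then {.ss} else ∅
  | .pp, .inl _ => {.b0}
  | .qq, .inl _ => {.b1}
  | .rr, .inl _ => {.b1}
  | .ss, .inl _ => {.b0}
  | _, _ => ∅

def Afam (k' : ℕ) : ∀ _ : Fin n, NFAm St (Sig ⊕ Fin n) := fun i =>
  { δ := delta Sig n i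
    I := {if Nat.testBit k' i then .b1 else .b0}
    F := {.b1} }

def good (c : ℕ) : Fin n → St := fun i => if Nat.testBit c i then .b1 else .b0

def mid (c : ℕ) (j : Fin n) : Fin n → St := fun i =>
  if (i:ℕ) < (j:ℕ) then .ss else if (i:ℕ) = (j:ℕ) then .rr
  else if Nat.testBit c i then .qq else .pp

variable {Sig n}

lemma good_b1 {c : ℕ} {i : Fin n} (h : Nat.testBit c i = true) : good n c i = .b1 := by
  simp [good, h]
lemma good_b0 {c : ℕ} {i : Fin n} (h : Nat.testBit c i = false) : good n c i = .b0 := by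
  simp [good, h]
lemma mid_lt {c : ℕ} {i j : Fin n} (h : (i:ℕ) < (j:ℕ)) : mid n c j i = .ss := by
  simp only [mid]; rw [if_pos h]
lemma mid_eq' {c : ℕ} {i j : Fin n} (h : (i:ℕ) = (j:ℕ)) : mid n c j i = .rr := by
  simp only [mid]; rw [if_neg (by omega), if_pos h]
lemma mid_gt {c : ℕ} {i j : Fin n} (h : (j:ℕ) < (i:ℕ)) :
    mid n c j i = if Nat.testBit c i then .qq else .pp := by
  simp only [mid]; rw [if_neg (by omega), if_neg (by omega)]

lemma delta_b0_inr (i j : Fin n) : delta Sig n i .b0 (Sum.inr j) =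
    (if (j:ℕ) < (i:ℕ) then {.pp} else if (j:ℕ) = (i:ℕ) then {.rr} else ∅) := rfl
lemma delta_b1_inr (i j : Fin n) : delta Sig n i .b1 (Sum.inr j) =
    (if (j:ℕ) < (i:ℕ) then {.qq} else if (i:ℕ) < (j:ℕ) then {.ss} else ∅) := rfl
lemma delta_b0_inl (i : Fin n) (b : Sig) : delta Sig n i .b0 (Sum.inl b) = ∅ := rfl
lemma delta_b1_inl (i : Fin n) (b : Sig) : delta Sig n i .b1 (Sum.inl b) = ∅ := rfl
lemma delta_pp_inl (i : Fin n) (b : Sig) : delta Sig n i .pp (Sum.inl b) = {.b0} := rfl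
lemma delta_qq_inl (i : Fin n) (b : Sig) : delta Sig n i .qq (Sum.inl b) = {.b1} := rfl
lemma delta_rr_inl (i : Fin n) (b : Sig) : delta Sig n i .rr (Sum.inl b) = {.b1} := rfl
lemma delta_ss_inl (i : Fin n) (b : Sig) : delta Sig n i .ss (Sum.inl b) = {.b0} := rfl
lemma delta_pp_inr (i j : Fin n) : delta Sig n i .pp (Sum.inr j) = ∅ := rfl
lemma delta_qq_inr (i j : Fin n) : delta Sig n i .qq (Sum.inr j) = ∅ := rfl
lemma delta_rr_inr (i j : Fin n) : delta Sig n i .rr (Sum.inr j) = ∅ := rfl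
lemma delta_ss_inr (i j : Fin n) : delta Sig n i .ss (Sum.inr j) = ∅ := rfl

lemma run_empty {Q E : Type} (A : NFAm Q E) (w : List E) : A.run w ∅ = ∅ := by
  induction w with
  | nil => rfl
  | cons a w ih =>
    show A.run w {q | ∃ p ∈ (∅ : Set Q), q ∈ A.δ p a} = ∅
    have : {q | ∃ p ∈ (∅ : Set Q), q ∈ A.δ p a} = (∅ : Set Q) := by simp
    rw [this, ih]

lemma run_cons {Q E : Type} (A : NFAm Q E) (a : E) (w : List E) (S : Set Q) :
    A.run (a :: w) S = A.run w {q | ∃ p ∈ S, q ∈ A.δ p a} := rfl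

lemma delta_good_inr {c : ℕ} {j : Fin n} (hc : Cond c (j:ℕ)) (i : Fin n) :
    delta Sig n i (good n c i) (Sum.inr j) = {mid n c j i} := by
  rcases lt_trichotomy (i:ℕ) (j:ℕ) with hlt | heq | hgt
  · rw [good_b1 (hc.1 _ hlt), delta_b1_inr, if_neg (by omega), if_pos hlt, mid_lt hlt]
  · have hb : Nat.testBit c i = false := by rw [heq]; exact hc.2
    rw [good_b0 hb, delta_b0_inr, if_neg (by omega), if_pos heq.symm, mid_eq' heq]
  · rw [mid_gt hgt]
    by_cases hb : Nat.testBit c i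
    · rw [good_b1 hb, delta_b1_inr, if_pos hgt, if_pos hb]
    · rw [good_b0 (by simpa using hb), delta_b0_inr, if_pos hgt, if_neg hb]

variable (Sig n) in
def PA (k' : ℕ) : NFAm ((i : Fin n) → St) (Sig ⊕ Fin n) := prodN (Afam Sig n k')

variable {k' : ℕ}

lemma mem_pdelta {p q : (i : Fin n) → St} {e : Sig ⊕ Fin n} :
    q ∈ (PA Sig n k').δ p e ↔ ∀ i, q i ∈ delta Sig n i (p i) e := Iff.rfl

lemma step_good_inl (hn : 0 < n) (c : ℕ) (b : Sig) :
    {q | ∃ p ∈ ({good n c} : Set ((i : Fin n) → St)), q ∈ (PA Sig n k').δ p (Sum.inl b)} = ∅ := by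
  ext q
  simp only [Set.mem_singleton_iff, Set.mem_setOf_eq, Set.mem_empty_iff_false, iff_false,
    not_exists]
  rintro p ⟨rfl, hq⟩
  have h := (mem_pdelta.mp hq) ⟨0, hn⟩
  by_cases hb : Nat.testBit c ((⟨0, hn⟩ : Fin n) : ℕ)
  · rw [good_b1 hb, delta_b1_inl] at h; exact h
  · rw [good_b0 (by simpa using hb), delta_b0_inl] at h; exact h

lemma step_good_inr {c : ℕ} {j : Fin n} (hc : Cond c (j:ℕ)) :
    {q | ∃ p ∈ ({good n c} : Set ((i : Fin n) → St)), q ∈ (PA Sig n k').δ p (Sum.inr j)} =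
      {mid n c j} := by
  ext q
  simp only [Set.mem_singleton_iff, Set.mem_setOf_eq]
  constructor
  · rintro ⟨p, rfl, hq⟩
    funext i
    have h := (mem_pdelta.mp hq) i
    rw [delta_good_inr hc i] at h
    exact h
  · rintro rfl
    exact ⟨good n c, rfl, mem_pdelta.mpr fun i => by rw [delta_good_inr hc i]; rfl⟩

lemma step_good_inr_not {c : ℕ} {j : Fin n} (hc : ¬ Cond c (j:ℕ)) :
    {q | ∃ p ∈ ({good n c} : Set ((i : Fin n) → St)), q ∈ (PA Sig n k').δ p (Sum.inr j)} =
      ∅ := by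
  ext q
  simp only [Set.mem_singleton_iff, Set.mem_setOf_eq, Set.mem_empty_iff_false, iff_false,
    not_exists]
  rintro p ⟨rfl, hq⟩
  rw [Cond, not_and_or] at hc
  rcases hc with hc | hc
  · push_neg at hc
    obtain ⟨i, hij, hbit⟩ := hc
    have hin : i < n := lt_trans hij j.isLt
    have h := (mem_pdelta.mp hq) ⟨i, hin⟩
    have hb : Nat.testBit c ((⟨i, hin⟩ : Fin n) : ℕ) = false := by simpa using hbit
    rw [good_b0 hb, delta_b0_inr, if_neg (by simpa using (by omega : ¬ (j:ℕ) < i)),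
      if_neg (by simpa using (by omega : ¬ (j:ℕ) = i))] at h
    exact h
  · have hb : Nat.testBit c (j:ℕ) = true := by simpa using hc
    have h := (mem_pdelta.mp hq) j
    rw [good_b1 hb, delta_b1_inr, if_neg (by omega), if_neg (by omega)] at h
    exact h

lemma step_mid_inl {c : ℕ} {j : Fin n} (hc : Cond c (j:ℕ)) (b : Sig) :
    {q | ∃ p ∈ ({mid n c j} : Set ((i : Fin n) → St)), q ∈ (PA Sig n k').δ p (Sum.inl b)} =
      {good n (c+1)} := by
  have key : ∀ i : Fin n, delta Sig n i (mid n c j i) (Sum.inl b) = {good n (c+1) i} := by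
    intro i
    have hsucc := testBit_succ_of hc (i:ℕ)
    rcases lt_trichotomy (i:ℕ) (j:ℕ) with hlt | heq | hgt
    · rw [if_pos hlt] at hsucc
      rw [mid_lt hlt, delta_ss_inl, good_b0 hsucc]
    · rw [if_neg (by omega), if_pos heq] at hsucc
      rw [mid_eq' heq, delta_rr_inl, good_b1 hsucc]
    · rw [if_neg (by omega), if_neg (by omega)] at hsucc
      rw [mid_gt hgt]
      by_cases hb : Nat.testBit c i
      · rw [if_pos hb, delta_qq_inl, good_b1 (by rw [hsucc, hb])]
      · rw [if_neg hb, delta_pp_inl, good_b0 (by rw [hsucc]; simpa using hb)]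
  ext q
  simp only [Set.mem_singleton_iff, Set.mem_setOf_eq]
  constructor
  · rintro ⟨p, rfl, hq⟩
    funext i
    have h := (mem_pdelta.mp hq) i
    rw [key i] at h
    exact h
  · rintro rfl
    exact ⟨mid n c j, rfl, mem_pdelta.mpr fun i => by rw [key i]; rfl⟩

lemma step_mid_inr {c : ℕ} {j j' : Fin n} :
    {q | ∃ p ∈ ({mid n c j} : Set ((i : Fin n) → St)), q ∈ (PA Sig n k').δ p (Sum.inr j')} =
      ∅ := by
  ext q
  simp only [Set.mem_singleton_iff, Set.mem_setOf_eq, Set.mem_empty_iff_false, iff_false,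
    not_exists]
  rintro p ⟨rfl, hq⟩
  have h := (mem_pdelta.mp hq) j
  rw [mid_eq' rfl, delta_rr_inr] at h
  exact h

end SixState
-- continuation; appended to aut.lean for testing
namespace SixState
variable {Sig : Type} {n k' : ℕ}

lemma good_mem_F {c : ℕ} (h : ∀ i : Fin n, Nat.testBit c i = true) :
    good n c ∈ (PA Sig n k').F := fun i => good_b1 (h i)

lemma eq_of_good_mem_F {c : ℕ} (hc : c < 2^n) (h : good n c ∈ (PA Sig n k').F) :
    c = 2^n - 1 := by
  apply Nat.eq_of_testBit_eq
  intro i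
  rw [Nat.testBit_two_pow_sub_one]
  by_cases hi : i < n
  · have hb := h ⟨i, hi⟩
    simp only [Set.mem_singleton_iff] at hb
    by_cases ht : Nat.testBit c ((⟨i, hi⟩ : Fin n) : ℕ)
    · simpa [hi] using ht
    · rw [good_b0 (by simpa using ht)] at hb
      cases hb
  · have : c < 2^i := lt_of_lt_of_le hc (Nat.pow_le_pow_right (by norm_num) (by omega))
    simp [hi, Nat.testBit_eq_false_of_lt this]

theorem lemA (hn : 0 < n) : ∀ (w : List (Sig ⊕ Fin n)) (c : ℕ), c < 2^n →
    ((PA Sig n k').run w {good n c} ∩ (PA Sig n k').F).Nonempty →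
    (projL w).length = 2^n - 1 - c
  | [], c, hc, hne => by
      obtain ⟨x, hx, hxF⟩ := hne
      rw [show (PA Sig n k').run [] {good n c} = {good n c} from rfl,
        Set.mem_singleton_iff] at hx
      subst hx
      have := eq_of_good_mem_F hc hxF
      simp [projL, this]
  | .inl b :: w, c, hc, hne => by
      rw [run_cons, step_good_inl hn c b, run_empty] at hne
      obtain ⟨x, hx, -⟩ := hne
      simp at hx
  | .inr j :: [], c, hc, hne => by
      by_cases hC : Cond c (j:ℕ)
      · rw [run_cons, step_good_inr hC] at hne
        obtain ⟨x, hx, hxF⟩ := hne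
        rw [show (PA Sig n k').run [] {mid n c j} = {mid n c j} from rfl,
          Set.mem_singleton_iff] at hx
        subst hx
        have h := hxF j
        rw [mid_eq' rfl] at h
        simp only [Set.mem_singleton_iff] at h
        cases h
      · rw [run_cons, step_good_inr_not hC, run_empty] at hne
        obtain ⟨x, hx, -⟩ := hne
        simp at hx
  | .inr j :: .inr j' :: w, c, hc, hne => by
      by_cases hC : Cond c (j:ℕ)
      · rw [run_cons, step_good_inr hC, run_cons, step_mid_inr, run_empty] at hne
        obtain ⟨x, hx, -⟩ := hne
        simp at hx
      · rw [run_cons, step_good_inr_not hC, run_empty] at hne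
        obtain ⟨x, hx, -⟩ := hne
        simp at hx
  | .inr j :: .inl b :: w, c, hc, hne => by
      by_cases hC : Cond c (j:ℕ)
      · rw [run_cons, step_good_inr hC, run_cons, step_mid_inl hC b] at hne
        have hcne : c ≠ 2^n - 1 := by
          intro h
          have h2 := hC.2
          rw [h, Nat.testBit_two_pow_sub_one] at h2
          simp [j.isLt] at h2
        have hc1 : c + 1 < 2^n := by omega
        have ih := lemA hn w (c+1) hc1 hne
        have hp : projL (Sum.inr j :: Sum.inl b :: w : List (Sig ⊕ Fin n)) = b :: projL w := by
          simp [projL, List.filterMap_cons]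
        rw [hp, List.length_cons, ih]
        omega
      · rw [run_cons, step_good_inr_not hC, run_empty] at hne
        obtain ⟨x, hx, -⟩ := hne
        simp at hx

lemma lowZero_ex (c : ℕ) : ∃ i, c.testBit i = false :=
  ⟨c, Nat.testBit_eq_false_of_lt (Nat.lt_two_pow_self)⟩

def lowZero (c : ℕ) : ℕ := Nat.find (lowZero_ex c)

lemma cond_lowZero (c : ℕ) : Cond c (lowZero c) := by
  constructor
  · intro i hi
    have := Nat.find_min (lowZero_ex c) hi
    simpa using this
  · exact Nat.find_spec (lowZero_ex c)

lemma lowZero_lt {c : ℕ} (hc : c < 2^n) (hne : c ≠ 2^n - 1) : lowZero c < n := by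
  by_contra h
  push_neg at h
  apply hne
  apply Nat.eq_of_testBit_eq
  intro i
  rw [Nat.testBit_two_pow_sub_one]
  by_cases hi : i < n
  · simp [hi, (cond_lowZero c).1 i (lt_of_lt_of_le hi h)]
  · have : c < 2^i := lt_of_lt_of_le hc (Nat.pow_le_pow_right (by norm_num) (by omega))
    simp [hi, Nat.testBit_eq_false_of_lt this]

def mkWord (hn : 0 < n) : ℕ → List Sig → List (Sig ⊕ Fin n)
  | _, [] => []
  | c, b :: u =>
      Sum.inr (⟨lowZero c % n, Nat.mod_lt _ hn⟩ : Fin n) :: Sum.inl b :: mkWord hn (c+1) u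

theorem lemB (hn : 0 < n) : ∀ (u : List Sig) (c : ℕ), c ≤ 2^n - 1 →
    u.length = 2^n - 1 - c →
    (PA Sig n k').run (mkWord hn c u) {good n c} = {good n (2^n - 1)} ∧
    projL (mkWord hn c u) = u
  | [], c, hc, hl => by
      simp only [List.length_nil] at hl
      have : c = 2^n - 1 := by omega
      subst this
      exact ⟨rfl, rfl⟩
  | b :: u, c, hc, hl => by
      simp only [List.length_cons] at hl
      have h2 : 1 ≤ (2:ℕ)^n := Nat.one_le_two_pow
      have hlt : c < 2^n := by omega
      have hne : c ≠ 2^n - 1 := by omega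
      have hjlt : lowZero c < n := lowZero_lt hlt hne
      have hmod : lowZero c % n = lowZero c := Nat.mod_eq_of_lt hjlt
      have hCj : Cond c (((⟨lowZero c % n, Nat.mod_lt _ hn⟩ : Fin n)) : ℕ) := by
        simpa [hmod] using cond_lowZero c
      obtain ⟨ih1, ih2⟩ := lemB hn u (c+1) (by omega) (by omega)
      constructor
      · show (PA Sig n k').run
          (Sum.inr (⟨lowZero c % n, Nat.mod_lt _ hn⟩ : Fin n) :: Sum.inl b ::
            mkWord hn (c+1) u) {good n c} = _
        rw [run_cons, step_good_inr hCj, run_cons, step_mid_inl hCj b, ih1]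
      · show projL
          (Sum.inr (⟨lowZero c % n, Nat.mod_lt _ hn⟩ : Fin n) :: Sum.inl b ::
            mkWord hn (c+1) u) = b :: u
        have hp : projL
            (Sum.inr (⟨lowZero c % n, Nat.mod_lt _ hn⟩ : Fin n) :: Sum.inl b ::
              mkWord hn (c+1) u) = b :: projL (mkWord hn (c+1) u) := by
          simp [projL, List.filterMap_cons]
        rw [hp, ih2]

lemma I_eq : (PA Sig n k').I = {good n k'} := by
  ext p
  simp only [Set.mem_singleton_iff]
  constructor
  · intro h; funext i; exact h i
  · rintro rfl i; rfl

end SixState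


/-- for every (finite nonempty) alphabet `Sig`, every `n ≥ 1` and
every `k` with `0 < k ≤ 2ⁿ`, there exist `n` NFAs with at most six states each
(obtained from the counting automata by choosing the initial states to encode
`k - 1` in binary) whose parallel composition recognizes a language whose
projection to `Sig` equals `Sig^{2ⁿ - k}`. -/
theorem six_state_counting_automata_offset {Sig : Type} [Fintype Sig] [Nonempty Sig]
    (n k : ℕ) (hn : 1 ≤ n) (hk1 : 0 < k) (hk2 : k ≤ 2 ^ n) :
    ∃ (Qs : Fin n → Type) (inst : ∀ i, Fintype (Qs i)),
      (∀ i, @Fintype.card (Qs i) (inst i) ≤ 6) ∧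
      ∃ A : ∀ i, NFAm (Qs i) (Sig ⊕ Fin n),
        projL '' (prodN A).Lm = {w : List Sig | w.length = 2 ^ n - k} := by
  classical
  refine ⟨fun _ => SixState.St, fun _ => inferInstance, fun i => ?_, SixState.Afam Sig n (k-1), ?_⟩
  · exact le_of_eq (show Fintype.card SixState.St = 6 by decide)
  · have hn0 : 0 < n := hn
    have h2 : 1 ≤ (2:ℕ)^n := Nat.one_le_two_pow
    have hk' : k - 1 < 2^n := by omega
    rw [show prodN (SixState.Afam Sig n (k-1)) = SixState.PA Sig n (k-1) from rfl]
    ext u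
    simp only [Set.mem_image, Set.mem_setOf_eq]
    constructor
    · rintro ⟨w, hw, rfl⟩
      have hw' : ((SixState.PA Sig n (k-1)).run w {SixState.good n (k-1)} ∩
          (SixState.PA Sig n (k-1)).F).Nonempty := by
        rwa [NFAm.Lm, Set.mem_setOf_eq, SixState.I_eq] at hw
      have := SixState.lemA hn0 w (k-1) hk' hw'
      omega
    · intro hu
      obtain ⟨h1, h2'⟩ := SixState.lemB (k' := k-1) hn0 u (k-1) (by omega) (by omega)
      refine ⟨SixState.mkWord hn0 (k-1) u, ?_, h2'⟩
      rw [NFAm.Lm, Set.mem_setOf_eq, SixState.I_eq, h1]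
      refine ⟨SixState.good n (2^n - 1), rfl, SixState.good_mem_F fun i => ?_⟩
      rw [Nat.testBit_two_pow_sub_one]
      simp [i.isLt]
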